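/- Let M and K be coprime positive integers with K > 1. Then Γ₀(M) can be generated by the matrix T = [[1,1],[0,1]] together with finitely many matrices of the form [[K·a, b], [M·c, K·d]] with a, b, c, d integers. -/

import Mathlib

open Matrix MatrixGroups

lemma my_exists_coprime_shift (b d : ℤ) (K : ℕ) (hK : K ≠ 0) (h : IsCoprime b d) :
    ∃ s : ℤ, IsCoprime (b + s * d) (K : ℤ) := by
  classical
  set ps := K.primeFactors.filter (fun p : ℕ => ¬ ((p : ℤ) ∣ b)) with hps
  refine ⟨((ps.prod (fun p => p) : ℕ) : ℤ), ?_⟩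
  rw [Int.isCoprime_iff_gcd_eq_one]
  rw [Int.gcd]
  apply Nat.Coprime.symm
  apply Nat.coprime_of_dvd
  intro p pp hpK hpx
  rw [Int.natAbs_natCast] at hpK
  have hpZ : (p : ℤ) ∣ b + (ps.prod (fun p => p) : ℕ) * d :=
    Int.dvd_natAbs.mp (Int.natCast_dvd_natCast.mpr hpx)
  have ppZ : Prime (p : ℤ) := Nat.prime_iff_prime_int.mp pp
  by_cases hpb : (p : ℤ) ∣ b
  · have h2 : (p : ℤ) ∣ (ps.prod (fun p => p) : ℕ) * d := by
      have := dvd_sub hpZ hpb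
      simpa using this
    rcases ppZ.dvd_mul.mp h2 with h3 | h3
    · rw [Int.natCast_dvd_natCast] at h3
      obtain ⟨q, hq, hq'⟩ := (pp.prime.dvd_finset_prod_iff _).mp h3
      have : p = q := (Nat.prime_dvd_prime_iff_eq pp (Nat.prime_of_mem_primeFactors
        (Finset.mem_filter.mp hq).1)).mp hq'
      subst this
      exact (Finset.mem_filter.mp hq).2 hpb
    · exact absurd (h.isUnit_of_dvd' hpb h3) ppZ.not_unit
  · have hmem : p ∈ ps := Finset.mem_filter.mpr
      ⟨Nat.mem_primeFactors.mpr ⟨pp, hpK, hK⟩, hpb⟩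
    have h3 : (p : ℤ) ∣ (ps.prod (fun p => p) : ℕ) * d :=
      Dvd.dvd.mul_right (Int.natCast_dvd_natCast.mpr (Finset.dvd_prod_of_mem _ hmem)) d
    exact hpb ((dvd_add_right h3).mp (by rwa [add_comm] at hpZ))

/-- The lower-triangular unipotent `[[1,0],[M,1]]` as an element of `SL(2,ℤ)`. -/
def myL (M : ℕ) : SL(2, ℤ) :=
  ⟨!![1, 0; (M : ℤ), 1], by simp [Matrix.det_fin_two_of]⟩

lemma myL_coe (M : ℕ) : (myL M : Matrix (Fin 2) (Fin 2) ℤ) = !![1, 0; (M : ℤ), 1] := rfl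

lemma myL_inv_coe (M : ℕ) :
    (((myL M)⁻¹ : SL(2, ℤ)) : Matrix (Fin 2) (Fin 2) ℤ) = !![1, 0; -(M : ℤ), 1] := by
  rw [Matrix.SpecialLinearGroup.coe_inv, myL_coe, Matrix.adjugate_fin_two]
  norm_num

lemma myL_zpow_coe (M : ℕ) (n : ℤ) :
    ((myL M ^ n : SL(2, ℤ)) : Matrix (Fin 2) (Fin 2) ℤ) = !![1, 0; n * (M : ℤ), 1] := by
  induction n using Int.induction_on with
  | zero => simp [Matrix.SpecialLinearGroup.coe_one]; ext i j; fin_cases i <;> fin_cases j <;> simp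
  | succ k ih =>
    rw [_root_.zpow_add, zpow_one, Matrix.SpecialLinearGroup.coe_mul, ih, myL_coe, Matrix.mul_fin_two]
    ext i j; fin_cases i <;> fin_cases j <;> simp <;> ring
  | pred k ih =>
    rw [_root_.zpow_sub, zpow_one, Matrix.SpecialLinearGroup.coe_mul, ih, myL_inv_coe,
      Matrix.mul_fin_two]
    ext i j; fin_cases i <;> fin_cases j <;> simp <;> ring

lemma my_key (M K : ℕ) (hK : K ≠ 0) (hcop : Nat.Coprime M K) (γ : SL(2, ℤ))
    (hγ : (M : ℤ) ∣ (γ : Matrix (Fin 2) (Fin 2) ℤ) 1 0) :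
    ∃ s u v a b c d : ℤ,
      ((myL M ^ v * ModularGroup.T ^ s * γ * myL M ^ u : SL(2, ℤ)) :
        Matrix (Fin 2) (Fin 2) ℤ) = !![(K : ℤ) * a, b; (M : ℤ) * c, (K : ℤ) * d] := by
  obtain ⟨c₀, hc₀⟩ := hγ
  set A := (γ : Matrix (Fin 2) (Fin 2) ℤ) 0 0 with hA
  set B := (γ : Matrix (Fin 2) (Fin 2) ℤ) 0 1 with hB
  set D := (γ : Matrix (Fin 2) (Fin 2) ℤ) 1 1 with hD
  have hdet : A * D - B * ((M : ℤ) * c₀) = 1 := by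
    have h1 := γ.det_coe
    rw [Matrix.det_fin_two] at h1
    rw [hA, hB, hD, ← hc₀]
    linarith
  have hBD : IsCoprime B D := ⟨-((M : ℤ) * c₀), A, by linear_combination hdet⟩
  obtain ⟨s, hs⟩ := my_exists_coprime_shift B D K hK hBD
  have hMK : IsCoprime (M : ℤ) (K : ℤ) := hcop.isCoprime
  obtain ⟨x, y, hxy⟩ := hMK.mul_left hs
  have hγm : (γ : Matrix (Fin 2) (Fin 2) ℤ) = !![A, B; (M : ℤ) * c₀, D] := by
    rw [Matrix.eta_fin_two (γ : Matrix (Fin 2) (Fin 2) ℤ), hc₀]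
  refine ⟨s, -(A + s * ((M : ℤ) * c₀)) * x, -D * x, (A + s * ((M : ℤ) * c₀)) * y, B + s * D,
    (-D * x) * ((K : ℤ) * ((A + s * ((M : ℤ) * c₀)) * y)) + c₀ +
      (-(A + s * ((M : ℤ) * c₀)) * x) * D, D * y, ?_⟩
  rw [Matrix.SpecialLinearGroup.coe_mul, Matrix.SpecialLinearGroup.coe_mul,
    Matrix.SpecialLinearGroup.coe_mul, myL_zpow_coe, myL_zpow_coe, ModularGroup.coe_T_zpow, hγm]
  ext i j
  fin_cases i <;> fin_cases j <;> simp [Matrix.mul_fin_two]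
  · linear_combination (-(A + s * ((M : ℤ) * c₀))) * hxy
  · linear_combination (D * x * (M : ℤ) * (A + s * ((M : ℤ) * c₀))) * hxy
  · linear_combination (-D) * hxy

lemma my_SL2_top :
    Subgroup.closure ({ModularGroup.S, ModularGroup.T} : Set SL(2, ℤ)) = ⊤ := by
  rw [Subgroup.eq_top_iff']
  suffices H : ∀ (n : ℕ) (g : SL(2, ℤ)), ((g : Matrix (Fin 2) (Fin 2) ℤ) 1 0).natAbs = n →
      g ∈ Subgroup.closure ({ModularGroup.S, ModularGroup.T} : Set SL(2, ℤ)) by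
    exact fun g => H _ g rfl
  intro n
  induction n using Nat.strong_induction_on with
  | _ n ih =>
    intro g hg
    have hS : ModularGroup.S ∈ Subgroup.closure ({ModularGroup.S, ModularGroup.T} :
        Set SL(2, ℤ)) := Subgroup.subset_closure (by simp)
    have hT : ModularGroup.T ∈ Subgroup.closure ({ModularGroup.S, ModularGroup.T} :
        Set SL(2, ℤ)) := Subgroup.subset_closure (by simp)
    by_cases hc : (g : Matrix (Fin 2) (Fin 2) ℤ) 1 0 = 0
    · have had := g.det_coe
      rw [Matrix.det_fin_two, hc] at had
      simp only [mul_zero, sub_zero] at had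
      rcases Int.eq_one_or_neg_one_of_mul_eq_one' had with ⟨ha, hd⟩ | ⟨ha, hd⟩
      · have : g = ModularGroup.T ^ ((g : Matrix (Fin 2) (Fin 2) ℤ) 0 1) := by
          apply Matrix.SpecialLinearGroup.ext
          intro i j
          fin_cases i <;> fin_cases j <;>
            simp [ModularGroup.coe_T_zpow, ha, hc, hd]
        rw [this]
        exact Subgroup.zpow_mem _ hT _
      · have : g = ModularGroup.S * ModularGroup.S *
            ModularGroup.T ^ (-((g : Matrix (Fin 2) (Fin 2) ℤ) 0 1)) := by
          apply Matrix.SpecialLinearGroup.ext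
          intro i j
          fin_cases i <;> fin_cases j <;>
            simp [Matrix.SpecialLinearGroup.coe_mul, ModularGroup.coe_T_zpow,
              ModularGroup.coe_S, Matrix.mul_fin_two, ha, hc, hd]
        rw [this]
        exact Subgroup.mul_mem _ (Subgroup.mul_mem _ hS hS) (Subgroup.zpow_mem _ hT _)
    · set a := (g : Matrix (Fin 2) (Fin 2) ℤ) 0 0 with ha
      set c := (g : Matrix (Fin 2) (Fin 2) ℤ) 1 0 with hcdef
      set q : ℤ := a / c with hq
      set h : SL(2, ℤ) := ModularGroup.S * ModularGroup.T ^ (-q) * g with hh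
      have hh10 : (h : Matrix (Fin 2) (Fin 2) ℤ) 1 0 = a % c := by
        rw [hh, Matrix.SpecialLinearGroup.coe_mul, Matrix.SpecialLinearGroup.coe_mul,
          ModularGroup.coe_S, ModularGroup.coe_T_zpow,
          Matrix.eta_fin_two (g : Matrix (Fin 2) (Fin 2) ℤ)]
        rw [Int.emod_def]
        simp [Matrix.mul_fin_two]
        ring
      have hlt : ((h : Matrix (Fin 2) (Fin 2) ℤ) 1 0).natAbs < n := by
        rw [hh10, ← hg]
        have h0 := Int.emod_nonneg a hc
        have h2 : a % c < |c| := by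
          have := Int.emod_lt a hc; rw [Int.abs_eq_natAbs]; exact this
        rw [Int.abs_eq_natAbs] at h2
        omega
      have hmem := ih _ hlt h rfl
      have hgeq : g = ModularGroup.T ^ q * ModularGroup.S⁻¹ * h := by
        rw [hh]
        group
      rw [hgeq]
      exact Subgroup.mul_mem _ (Subgroup.mul_mem _ (Subgroup.zpow_mem _ hT _)
        (Subgroup.inv_mem _ hS)) hmem

/-- For coprime positive integers `M, K` with `K > 1`, the group `Γ₀(M)` is generated
by `T = [[1,1],[0,1]]` together with finitely many matrices of the form
`[[K·a, b], [M·c, K·d]]`. -/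
theorem Gamma0_generated_by_T_and_special (M K : ℕ) (hM : 0 < M) (hK : 1 < K)
    (hcop : Nat.Coprime M K) :
    ∃ (T : Matrix.SpecialLinearGroup (Fin 2) ℤ)
      (S : Finset (Matrix.SpecialLinearGroup (Fin 2) ℤ)),
      (T : Matrix (Fin 2) (Fin 2) ℤ) = !![1, 1; 0, 1] ∧
      (∀ γ ∈ S, ∃ a b c d : ℤ,
        (γ : Matrix (Fin 2) (Fin 2) ℤ) = !![(K : ℤ) * a, b; (M : ℤ) * c, (K : ℤ) * d]) ∧
      CongruenceSubgroup.Gamma0 M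
        = Subgroup.closure (insert T (S : Set (Matrix.SpecialLinearGroup (Fin 2) ℤ))) := by
  classical
  haveI : NeZero M := ⟨hM.ne'⟩
  have hK0 : K ≠ 0 := by omega
  -- T and L are in Γ₀(M)
  have hTmem : ModularGroup.T ∈ CongruenceSubgroup.Gamma0 M := by
    rw [CongruenceSubgroup.Gamma0_mem]
    have : (ModularGroup.T : Matrix (Fin 2) (Fin 2) ℤ) 1 0 = 0 := by
      rw [ModularGroup.coe_T]; simp
    rw [show (ModularGroup.T 1 0 : ℤ) = 0 from this]
    simp
  have hLmem : myL M ∈ CongruenceSubgroup.Gamma0 M := by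
    rw [CongruenceSubgroup.Gamma0_mem]
    have : (myL M : Matrix (Fin 2) (Fin 2) ℤ) 1 0 = (M : ℤ) := by
      rw [myL_coe]; simp
    rw [show (myL M 1 0 : ℤ) = (M : ℤ) from this]
    simp
  -- Γ₀(M) is finitely generated
  haveI hfg : Group.FG SL(2, ℤ) :=
    Group.fg_iff.mpr ⟨{ModularGroup.S, ModularGroup.T}, my_SL2_top,
      (Set.finite_singleton _).insert _⟩
  have hle : CongruenceSubgroup.Gamma M ≤ CongruenceSubgroup.Gamma0 M := fun γ hγ =>
    CongruenceSubgroup.Gamma0_mem.mpr (CongruenceSubgroup.Gamma_mem.mp hγ).2.2.1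
  haveI : (CongruenceSubgroup.Gamma M).FiniteIndex := Subgroup.finiteIndex_ker _
  haveI : (CongruenceSubgroup.Gamma0 M).FiniteIndex := Subgroup.finiteIndex_of_le hle
  obtain ⟨Sset, hclos, hfin⟩ := Group.fg_iff.mp
    (inferInstance : Group.FG (CongruenceSubgroup.Gamma0 M))
  have hG0 : CongruenceSubgroup.Gamma0 M
      = Subgroup.closure ((CongruenceSubgroup.Gamma0 M).subtype '' Sset) := by
    rw [← MonoidHom.map_closure, hclos, ← MonoidHom.range_eq_map, Subgroup.range_subtype]
  -- special form for each generator
  have key : ∀ γ : ↥(CongruenceSubgroup.Gamma0 M), ∃ s u v a b c d : ℤ,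
      ((myL M ^ v * ModularGroup.T ^ s * (γ : SL(2, ℤ)) * myL M ^ u : SL(2, ℤ)) :
        Matrix (Fin 2) (Fin 2) ℤ) = !![(K : ℤ) * a, b; (M : ℤ) * c, (K : ℤ) * d] := by
    intro γ
    apply my_key M K hK0 hcop
    exact (ZMod.intCast_zmod_eq_zero_iff_dvd _ M).mp (CongruenceSubgroup.Gamma0_mem.mp γ.2)
  choose s u v a b c d hδ using key
  set δfun : ↥(CongruenceSubgroup.Gamma0 M) → SL(2, ℤ) := fun γ =>
    myL M ^ v γ * ModularGroup.T ^ s γ * (γ : SL(2, ℤ)) * myL M ^ u γ with hδfun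
  -- special matrix related to L
  obtain ⟨x, y, hxy⟩ := (hcop.isCoprime : IsCoprime (M : ℤ) (K : ℤ))
  set δL : SL(2, ℤ) := ModularGroup.T ^ (-x) * myL M * ModularGroup.T ^ (-x) with hδLdef
  have hδL : (δL : Matrix (Fin 2) (Fin 2) ℤ)
      = !![(K : ℤ) * y, x * x * (M : ℤ) - 2 * x; (M : ℤ) * 1, (K : ℤ) * y] := by
    rw [hδLdef, Matrix.SpecialLinearGroup.coe_mul, Matrix.SpecialLinearGroup.coe_mul,
      ModularGroup.coe_T_zpow, myL_coe]
    ext i j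
    fin_cases i <;> fin_cases j <;> simp [Matrix.mul_fin_two] <;>
      first
        | ring1
        | linear_combination -hxy
  have hLeq : myL M = ModularGroup.T ^ x * δL * ModularGroup.T ^ x := by
    rw [hδLdef]; group
  refine ⟨ModularGroup.T, (hfin.toFinset.image δfun) ∪ {δL}, ModularGroup.coe_T, ?_, ?_⟩
  · intro δ hmem
    rcases Finset.mem_union.mp hmem with hmem | hmem
    · obtain ⟨γ, _, rfl⟩ := Finset.mem_image.mp hmem
      exact ⟨a γ, b γ, c γ, d γ, hδ γ⟩
    · rw [Finset.mem_singleton.mp hmem]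
      exact ⟨y, x * x * (M : ℤ) - 2 * x, 1, y, hδL⟩
  · apply le_antisymm
    · -- Γ₀(M) ≤ closure
      set cl := Subgroup.closure (insert ModularGroup.T
        ((hfin.toFinset.image δfun ∪ {δL} : Finset SL(2, ℤ)) : Set SL(2, ℤ))) with hcl
      have hTcl : ModularGroup.T ∈ cl := Subgroup.subset_closure (Set.mem_insert _ _)
      have hδLcl : δL ∈ cl := Subgroup.subset_closure (Set.mem_insert_of_mem _ (by simp))
      have hLcl : myL M ∈ cl := by
        rw [hLeq]
        exact Subgroup.mul_mem _ (Subgroup.mul_mem _ (Subgroup.zpow_mem _ hTcl _) hδLcl)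
          (Subgroup.zpow_mem _ hTcl _)
      rw [hG0]
      apply (Subgroup.closure_le _).mpr
      rintro g ⟨γ, hγS, rfl⟩
      have hδcl : δfun γ ∈ cl := by
        apply Subgroup.subset_closure
        apply Set.mem_insert_of_mem
        simp only [Finset.coe_union, Set.mem_union, Finset.mem_coe]
        exact Or.inl (Finset.mem_image_of_mem δfun (hfin.mem_toFinset.mpr hγS))
      have hγeq : ((CongruenceSubgroup.Gamma0 M).subtype γ : SL(2, ℤ))
          = (ModularGroup.T ^ s γ)⁻¹ * (myL M ^ v γ)⁻¹ * δfun γ * (myL M ^ u γ)⁻¹ := by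
        rw [hδfun]
        simp only [Subgroup.coe_subtype]
        group
      rw [hγeq]
      exact Subgroup.mul_mem _ (Subgroup.mul_mem _ (Subgroup.mul_mem _
        (Subgroup.inv_mem _ (Subgroup.zpow_mem _ hTcl _))
        (Subgroup.inv_mem _ (Subgroup.zpow_mem _ hLcl _))) hδcl)
        (Subgroup.inv_mem _ (Subgroup.zpow_mem _ hLcl _))
    · -- closure ≤ Γ₀(M)
      apply (Subgroup.closure_le _).mpr
      intro g hg
      rcases Set.mem_insert_iff.mp hg with rfl | hg
      · exact hTmem
      · simp only [Finset.coe_union, Set.mem_union, Finset.mem_coe] at hg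
        rcases hg with hg | hg
        · obtain ⟨γ, _, rfl⟩ := Finset.mem_image.mp hg
          exact Subgroup.mul_mem _ (Subgroup.mul_mem _ (Subgroup.mul_mem _
            (Subgroup.zpow_mem _ hLmem _) (Subgroup.zpow_mem _ hTmem _)) γ.2)
            (Subgroup.zpow_mem _ hLmem _)
        · rw [Finset.mem_singleton.mp hg]
          exact Subgroup.mul_mem _ (Subgroup.mul_mem _ (Subgroup.zpow_mem _ hTmem _) hLmem)
            (Subgroup.zpow_mem _ hTmem _)
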